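/- For every ultrafilter x that is not on a finite level (L_i ∉ x for all i) and every n, there exists an ultrafilter y with L_n ∈ y such that y tilde-divides x. -/

import Mathlib

/-- `L n` : positive naturals with exactly `n` prime factors counted with multiplicity. -/
def L (n : ℕ) : Set ℕ+ := {m : ℕ+ | (m : ℕ).primeFactorsList.length = n}

/-- Product of ultrafilters on `ℕ+`: `A ∈ umul x y ↔ {n | {m | n*m ∈ A} ∈ y} ∈ x`. -/
def umul (x y : Ultrafilter ℕ+) : Ultrafilter ℕ+ :=
  x.bind fun n => y.map fun m => n * m

/-- tilde-divisibility. -/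
def tdvd (u v : Ultrafilter ℕ+) : Prop :=
  ∀ A ∈ u, {m : ℕ+ | ∃ a ∈ A, a ∣ m} ∈ v

/-- irreducible ultrafilter. -/
def Irred (p : Ultrafilter ℕ+) : Prop :=
  p ≠ pure 1 ∧ ∀ x y : Ultrafilter ℕ+, p = umul x y → x = pure 1 ∨ y = pure 1

lemma aux_len (l : List ℕ) (hl : ∀ p ∈ l, p.Prime) :
    (l.prod).primeFactorsList.length = l.length := by
  induction l with
  | nil => simp
  | cons p t ih =>
    have hp := hl p List.mem_cons_self
    have ht : ∀ q ∈ t, q.Prime := fun q hq => hl q (List.mem_cons_of_mem _ hq)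
    have htp : t.prod ≠ 0 := by
      intro h
      exact Nat.not_prime_zero (ht 0 (List.prod_eq_zero_iff.mp h))
    have := (Nat.perm_primeFactorsList_mul hp.ne_zero htp).length_eq
    simp only [List.prod_cons]
    rw [this, List.length_append, Nat.primeFactorsList_prime hp, ih ht]
    simp [Nat.add_comm]

theorem stmt_17 (x : Ultrafilter ℕ+) (hx : ∀ i : ℕ, L i ∉ x) (n : ℕ) :
    ∃ y : Ultrafilter ℕ+, L n ∈ y ∧ tdvd y x := by
  -- the set of m with at least n prime factors
  set S : Set ℕ+ := {m : ℕ+ | n ≤ (m : ℕ).primeFactorsList.length} with hS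
  have hSx : S ∈ x := by
    by_contra h
    have hc : Sᶜ ∈ x := Ultrafilter.compl_mem_iff_notMem.mpr h
    have : Sᶜ = ⋃ i ∈ Finset.range n, L i := by
      ext m
      simp only [Set.mem_compl_iff, hS, Set.mem_setOf_eq, not_le, Set.mem_iUnion,
        Finset.mem_coe, Finset.mem_range, L, exists_prop]
      exact ⟨fun hm => ⟨_, hm, rfl⟩, fun ⟨i, hi, he⟩ => he ▸ hi⟩
    rw [this] at hc
    obtain ⟨i, _, hi⟩ := (Ultrafilter.finite_biUnion_mem_iff (Finset.range n).finite_toSet).mp hc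
    exact hx i hi
  -- the map sending m to the product of its first n prime factors
  have hprime : ∀ m : ℕ+, ∀ p ∈ ((m : ℕ).primeFactorsList.take n), p.Prime :=
    fun m p hp => Nat.prime_of_mem_primeFactorsList (List.mem_of_mem_take hp)
  have hpos : ∀ m : ℕ+, 0 < ((m : ℕ).primeFactorsList.take n).prod := by
    intro m
    apply List.prod_pos
    intro p hp
    exact (hprime m p hp).pos
  set f : ℕ+ → ℕ+ := fun m => ⟨((m : ℕ).primeFactorsList.take n).prod, hpos m⟩ with hf
  have hdvd : ∀ m : ℕ+, f m ∣ m := by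
    intro m
    have : (f m : ℕ) ∣ (m : ℕ) := by
      have := (m : ℕ).primeFactorsList.take_append_drop n
      calc (f m : ℕ) ∣ (m : ℕ).primeFactorsList.prod := by
            rw [← this, List.prod_append]; exact Dvd.intro _ rfl
        _ = (m : ℕ) := Nat.prod_primeFactorsList m.ne_zero
    exact_mod_cast PNat.dvd_iff.mpr this
  have hlen : ∀ m ∈ S, f m ∈ L n := by
    intro m hm
    have : ((f m : ℕ)).primeFactorsList.length = ((m : ℕ).primeFactorsList.take n).length :=
      aux_len _ (hprime m)
    simp only [L, Set.mem_setOf_eq, this, List.length_take]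
    exact min_eq_left hm
  refine ⟨x.map f, ?_, ?_⟩
  · exact Ultrafilter.mem_map.mpr (Filter.mem_of_superset hSx hlen)
  · intro A hA
    have hA' : f ⁻¹' A ∈ x := Ultrafilter.mem_map.mp hA
    refine Filter.mem_of_superset (Filter.inter_mem hA' hSx) ?_
    rintro m ⟨hmA, _⟩
    exact ⟨f m, hmA, hdvd m⟩
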